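/- Let H(z,w) ∈ ℂ[z,w] be a homogeneous polynomial of degree m ≥ 2 with H(1,0) ≠ 0, and assume H is not a scalar multiple of the m-th power of a linear form. Define R : ℂ → ℝ by R(u) = 2·|Δ_H(u,1)|² / (|H_z(u,1)|² + |H_w(u,1)|²)³ if (H_z(u,1), H_w(u,1)) ≠ (0,0), and R(u) = 0 otherwise. Then: (1) if (H_z(u,1), H_w(u,1)) = (0,0) then H(u,1) = 0; (2) R is continuous on all of ℂ and R(u) ≥ 0 for all u; (3) R(u) = 0 whenever H(u,1) = 0; (4) R(u) → 0 as |u| → ∞; (5) R attains a positive absolute maximum on ℂ. -/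

import Mathlib

open MvPolynomial

/-- `Δ_H = 2 H_z H_w H_zw − H_zz H_w² − H_z² H_ww` of a binary form. -/
noncomputable def deltaH (H : MvPolynomial (Fin 2) ℂ) : MvPolynomial (Fin 2) ℂ :=
  2 * pderiv (0 : Fin 2) H * pderiv (1 : Fin 2) H
      * pderiv (1 : Fin 2) (pderiv (0 : Fin 2) H)
    - pderiv (0 : Fin 2) (pderiv (0 : Fin 2) H) * (pderiv (1 : Fin 2) H) ^ 2
    - (pderiv (0 : Fin 2) H) ^ 2 * pderiv (1 : Fin 2) (pderiv (1 : Fin 2) H)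

noncomputable def tp : MvPolynomial (Fin 2) ℂ →ₐ[ℂ] Polynomial ℂ :=
  aeval ![Polynomial.X, 1]

lemma tp_eval (P : MvPolynomial (Fin 2) ℂ) (u : ℂ) :
    (tp P).eval u = eval ![u, 1] P := by
  induction P using MvPolynomial.induction_on with
  | C a => simp [tp]
  | add p q hp hq => simp [map_add, hp, hq]
  | mul_X p i hp =>
      fin_cases i <;> simp [tp, map_mul, hp] at * <;> simp [hp]

noncomputable def tpw (z : ℂ) : MvPolynomial (Fin 2) ℂ →ₐ[ℂ] Polynomial ℂ :=
  aeval ![Polynomial.C z, Polynomial.X]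

lemma tpw_eval (P : MvPolynomial (Fin 2) ℂ) (z w : ℂ) :
    ((tpw z) P).eval w = eval ![z, w] P := by
  induction P using MvPolynomial.induction_on with
  | C a => simp [tpw]
  | add p q hp hq => simp [map_add, hp, hq]
  | mul_X p i hp =>
      fin_cases i <;> simp [tpw, map_mul, hp] at * <;> simp [hp]

lemma monomial_fin2 (s : Fin 2 →₀ ℕ) (a : ℂ) :
    monomial s a = C a * X (0 : Fin 2) ^ s 0 * X 1 ^ s 1 := by
  rw [monomial_eq, Finsupp.prod_fintype _ _ (fun i => pow_zero _), Fin.prod_univ_two, mul_assoc]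

lemma degree_fin2 {s : Fin 2 →₀ ℕ} : s.degree = s 0 + s 1 := by
  rw [Finsupp.degree_eq_weight_one]
  simp [Finsupp.weight_apply, Finsupp.sum_fintype, Fin.sum_univ_two]

lemma euler_mon (a : ℂ) (j k : ℕ) :
    X (0 : Fin 2) * pderiv (0 : Fin 2) (C a * X (0:Fin 2) ^ j * X 1 ^ k)
      + X 1 * pderiv (1 : Fin 2) (C a * X (0:Fin 2) ^ j * X 1 ^ k)
      = (C ((j : ℂ) + k)) * (C a * X 0 ^ j * X 1 ^ k) := by
  have h01 : (0 : Fin 2) ≠ 1 := by decide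
  obtain _ | j := j <;> obtain _ | k := k <;>
    simp [pderiv_mul, pderiv_pow, pderiv_X_self, pderiv_X_of_ne h01, pderiv_X_of_ne h01.symm,
      pderiv_C, map_add, map_natCast] <;> push_cast <;> ring

lemma euler {n : ℕ} {P : MvPolynomial (Fin 2) ℂ} (h : P.IsHomogeneous n) :
    X (0 : Fin 2) * pderiv (0 : Fin 2) P + X 1 * pderiv (1 : Fin 2) P = C (n : ℂ) * P := by
  conv_lhs => rw [P.as_sum]
  conv_rhs => rw [P.as_sum]
  rw [map_sum, map_sum, Finset.mul_sum, Finset.mul_sum, Finset.mul_sum,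
    ← Finset.sum_add_distrib]
  refine Finset.sum_congr rfl fun s hs => ?_
  have hsn : s 0 + s 1 = n := by
    have := h (MvPolynomial.mem_support_iff.mp hs)
    change Finsupp.weight (fun _ => 1) s = n at this
    rw [← Finsupp.degree_eq_weight_one, degree_fin2] at this
    exact this
  rw [monomial_fin2]
  have := euler_mon (coeff s P) (s 0) (s 1)
  rw [this, ← hsn]
  push_cast
  ring

section
variable {P : MvPolynomial (Fin 2) ℂ} {n : ℕ}

lemma hsn_of_mem (h : P.IsHomogeneous n) {s : Fin 2 →₀ ℕ} (hs : s ∈ P.support) :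
    s 0 + s 1 = n := by
  have := h (MvPolynomial.mem_support_iff.mp hs)
  change Finsupp.weight (fun _ => 1) s = n at this
  rw [← Finsupp.degree_eq_weight_one, degree_fin2] at this
  exact this

lemma pd_homog (h : P.IsHomogeneous n) (i : Fin 2) : (pderiv i P).IsHomogeneous (n - 1) := by
  rw [P.as_sum, map_sum]
  apply IsHomogeneous.sum
  intro s hs
  rw [pderiv_monomial]
  by_cases h0 : s i = 0
  · simp [h0, isHomogeneous_zero]
  · apply isHomogeneous_monomial
    have hd : s 0 + s 1 = n := hsn_of_mem h hs
    rw [degree_fin2]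
    simp only [Finsupp.tsub_apply]
    fin_cases i <;> simp [Finsupp.single_apply] at h0 ⊢ <;> omega

lemma eval_smul_homog (h : P.IsHomogeneous n) (c : ℂ) (x : Fin 2 → ℂ) :
    eval (fun i => c * x i) P = c ^ n * eval x P := by
  rw [P.as_sum, map_sum, map_sum, Finset.mul_sum]
  refine Finset.sum_congr rfl fun s hs => ?_
  have hsn : s 0 + s 1 = n := hsn_of_mem h hs
  rw [monomial_fin2]
  simp only [map_mul, map_pow, eval_C, eval_X, ← hsn]
  ring

lemma tp_natDegree_le (h : P.IsHomogeneous n) : (tp P).natDegree ≤ n := by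
  conv_lhs => rw [P.as_sum, map_sum]
  refine Polynomial.natDegree_sum_le_of_forall_le _ _ fun s hs => ?_
  have hsn : s 0 + s 1 = n := hsn_of_mem h hs
  rw [monomial_fin2]
  simp only [tp, map_mul, map_pow, aeval_C, aeval_X]
  simp only [Matrix.cons_val_zero, Matrix.cons_val_one, Matrix.head_cons, one_pow, mul_one]
  refine (Polynomial.natDegree_mul_le).trans ?_
  simp [Polynomial.natDegree_X_pow, Polynomial.algebraMap_eq]
  omega

lemma tp_coeff_top (h : P.IsHomogeneous n) : (tp P).coeff n = eval ![1, 0] P := by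
  rw [P.as_sum, map_sum, map_sum, Polynomial.finset_sum_coeff]
  refine Finset.sum_congr rfl fun s hs => ?_
  have hsn : s 0 + s 1 = n := hsn_of_mem h hs
  rw [monomial_fin2]
  simp only [tp, map_mul, map_pow, aeval_C, aeval_X, eval_C, eval_X, eval_pow, eval_mul,
    Matrix.cons_val_zero, Matrix.cons_val_one, Matrix.head_cons, one_pow, mul_one,
    Polynomial.algebraMap_eq]
  rw [Polynomial.coeff_C_mul, Polynomial.coeff_X_pow]
  by_cases h1 : s 1 = 0
  · have : s 0 = n := by omega
    simp [h1, this]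
  · have : ¬ (n = s 0) := by omega
    simp [this, zero_pow h1]

lemma tp_pderiv0 (P : MvPolynomial (Fin 2) ℂ) :
    tp (pderiv (0 : Fin 2) P) = Polynomial.derivative (tp P) := by
  induction P using MvPolynomial.induction_on with
  | C a => simp [tp]
  | add p q hp hq => simp [map_add, hp, hq]
  | mul_X p i hp =>
      fin_cases i <;>
        simp only [pderiv_mul, map_add, map_mul, pderiv_X_self, pderiv_X_of_ne,
          Polynomial.derivative_mul, map_one, mul_one] <;>
        simp [tp] at hp ⊢ <;> simp [hp] <;> ring
end

lemma eval_norm_le (p : Polynomial ℂ) (N : ℕ) (hp : p.natDegree ≤ N) :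
    ∃ C : ℝ, 0 ≤ C ∧ ∀ u : ℂ, 1 ≤ ‖u‖ → ‖p.eval u‖ ≤ C * ‖u‖ ^ N := by
  refine ⟨∑ i ∈ Finset.range (N + 1), ‖p.coeff i‖,
    Finset.sum_nonneg fun i _ => norm_nonneg _, fun u hu => ?_⟩
  rw [Polynomial.eval_eq_sum_range' (Nat.lt_succ_of_le hp), Finset.sum_mul]
  refine (norm_sum_le _ _).trans (Finset.sum_le_sum fun i hi => ?_)
  rw [norm_mul, norm_pow]
  have h1 : ‖u‖ ^ i ≤ ‖u‖ ^ N :=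
    pow_le_pow_right₀ hu (Nat.lt_succ_iff.mp (Finset.mem_range.mp hi))
  exact mul_le_mul_of_nonneg_left h1 (norm_nonneg _)

lemma eval_norm_ge (p : Polynomial ℂ) (n : ℕ) (hn : p.natDegree = n) (h1n : 1 ≤ n)
    (hp : p ≠ 0) :
    ∃ ε : ℝ, 0 < ε ∧ ∃ T : ℝ, 1 ≤ T ∧ ∀ u : ℂ, T ≤ ‖u‖ → ε * ‖u‖ ^ n ≤ ‖p.eval u‖ := by
  set L := p.leadingCoeff with hL
  have hL0 : L ≠ 0 := Polynomial.leadingCoeff_ne_zero.mpr hp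
  set r := p - Polynomial.C L * Polynomial.X ^ n with hr
  have hrd : r.natDegree ≤ n - 1 := by
    rw [Polynomial.natDegree_le_iff_coeff_eq_zero]
    intro N hN
    have hNn : n ≤ N := by omega
    rw [hr, Polynomial.coeff_sub, Polynomial.coeff_C_mul, Polynomial.coeff_X_pow]
    rcases eq_or_lt_of_le hNn with h | h
    · rw [← h, if_pos rfl, mul_one, ← hn, hL, Polynomial.coeff_natDegree, sub_self]
    · rw [if_neg (by omega), mul_zero, sub_zero, Polynomial.coeff_eq_zero_of_natDegree_lt]
      omega
  obtain ⟨Cr, hCr0, hCr⟩ := eval_norm_le r (n - 1) hrd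
  have hLpos : (0:ℝ) < ‖L‖ := norm_pos_iff.mpr hL0
  refine ⟨‖L‖ / 2, by positivity, max 1 (2 * Cr / ‖L‖), le_max_left _ _, fun u hu => ?_⟩
  have hu1 : (1 : ℝ) ≤ ‖u‖ := le_trans (le_max_left _ _) hu
  have hu2 : 2 * Cr / ‖L‖ ≤ ‖u‖ := le_trans (le_max_right _ _) hu
  have hu0 : (0 : ℝ) < ‖u‖ := lt_of_lt_of_le one_pos hu1
  have hsplit : ‖u‖ ^ n = ‖u‖ ^ (n - 1) * ‖u‖ := by
    rw [← pow_succ]; congr 1; omega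
  have heval : p.eval u = L * u ^ n + r.eval u := by
    rw [hr]
    simp only [Polynomial.eval_sub, Polynomial.eval_mul, Polynomial.eval_C,
      Polynomial.eval_pow, Polynomial.eval_X]
    ring
  have h2 : ‖L * u ^ n‖ ≤ ‖p.eval u‖ + ‖r.eval u‖ := by
    calc ‖L * u ^ n‖ = ‖p.eval u - r.eval u‖ := by rw [heval]; ring_nf
    _ ≤ ‖p.eval u‖ + ‖r.eval u‖ := norm_sub_le _ _
  have h3 : ‖r.eval u‖ ≤ Cr * ‖u‖ ^ (n - 1) := hCr u hu1
  have h4 : Cr * ‖u‖ ^ (n - 1) ≤ ‖L‖ / 2 * ‖u‖ ^ n := by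
    rw [hsplit]
    rw [div_le_iff₀ hLpos] at hu2
    have hP : (0:ℝ) ≤ ‖u‖ ^ (n - 1) := pow_nonneg (norm_nonneg u) _
    nlinarith [hP, hLpos]
  have h5 : ‖L * u ^ n‖ = ‖L‖ * ‖u‖ ^ n := by rw [norm_mul, norm_pow]
  nlinarith [pow_pos hu0 n]

lemma tp_C (a : ℂ) : tp (C a) = Polynomial.C a := by simp [tp, Polynomial.algebraMap_eq]
lemma tp_X0 : tp (X (0 : Fin 2)) = Polynomial.X := by simp [tp]
lemma tp_X1 : tp (X (1 : Fin 2)) = 1 := by simp [tp]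

open Polynomial in
/-- double factorization at a double root -/
lemma fact2 {p : Polynomial ℂ} (hp : p ≠ 0) (u₀ : ℂ) (hr0 : p.eval u₀ = 0)
    (hr1 : (Polynomial.derivative p).eval u₀ = 0) :
    ∃ (k₂ : ℕ) (g g1 g2 : Polynomial ℂ), g.eval u₀ ≠ 0 ∧
      g1.eval u₀ = ((k₂ + 2 : ℕ) : ℂ) * g.eval u₀ ∧
      g2.eval u₀ = ((k₂ + 1 : ℕ) : ℂ) * g1.eval u₀ ∧
      rootMultiplicity u₀ p = k₂ + 2 ∧
      p = (Polynomial.X - Polynomial.C u₀) ^ (k₂ + 2) * g ∧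
      Polynomial.derivative p = (Polynomial.X - Polynomial.C u₀) ^ (k₂ + 1) * g1 ∧
      Polynomial.derivative (Polynomial.derivative p)
        = (Polynomial.X - Polynomial.C u₀) ^ k₂ * g2 := by
  set k := rootMultiplicity u₀ p with hk
  have hk1 : 1 ≤ k := (Polynomial.rootMultiplicity_pos hp).mpr hr0
  set g : Polynomial ℂ := p /ₘ (Polynomial.X - Polynomial.C u₀) ^ k with hg
  have hfac : (Polynomial.X - Polynomial.C u₀) ^ k * g = p :=
    Polynomial.pow_mul_divByMonic_rootMultiplicity_eq p u₀
  have hgne : g.eval u₀ ≠ 0 := Polynomial.eval_divByMonic_pow_rootMultiplicity_ne_zero u₀ hp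
  -- first derivative
  obtain ⟨k₁, hkk⟩ : ∃ k₁, k = k₁ + 1 := ⟨k - 1, by omega⟩
  set g1 : Polynomial ℂ := Polynomial.C ((k₁ + 1 : ℕ) : ℂ) * g
      + (Polynomial.X - Polynomial.C u₀) * Polynomial.derivative g with hg1def
  have hder1 : Polynomial.derivative p
      = (Polynomial.X - Polynomial.C u₀) ^ k₁ * g1 := by
    rw [← hfac, hkk]
    rw [Polynomial.derivative_mul, Polynomial.derivative_pow]
    simp only [Polynomial.derivative_sub, Polynomial.derivative_X, Polynomial.derivative_C,
      sub_zero, mul_one, hg1def]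
    push_cast
    ring
  have hg1ev : g1.eval u₀ = ((k₁ + 1 : ℕ) : ℂ) * g.eval u₀ := by
    simp [hg1def]
  -- k ≥ 2
  have hk2 : 1 ≤ k₁ := by
    by_contra hcon
    have hk10 : k₁ = 0 := by omega
    apply hgne
    have hx : Polynomial.eval u₀ g1 = 0 := by
      rw [hder1, hk10] at hr1; simpa using hr1
    rw [hg1ev, hk10] at hx
    simpa using hx
  obtain ⟨k₂, hkk2⟩ : ∃ k₂, k₁ = k₂ + 1 := ⟨k₁ - 1, by omega⟩
  set g2 : Polynomial ℂ := Polynomial.C ((k₂ + 1 : ℕ) : ℂ) * g1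
      + (Polynomial.X - Polynomial.C u₀) * Polynomial.derivative g1 with hg2def
  have hder2 : Polynomial.derivative (Polynomial.derivative p)
      = (Polynomial.X - Polynomial.C u₀) ^ k₂ * g2 := by
    rw [hder1, hkk2]
    rw [Polynomial.derivative_mul, Polynomial.derivative_pow]
    simp only [Polynomial.derivative_sub, Polynomial.derivative_X, Polynomial.derivative_C,
      sub_zero, mul_one, hg2def]
    push_cast
    ring
  have hg2ev : g2.eval u₀ = ((k₂ + 1 : ℕ) : ℂ) * g1.eval u₀ := by
    simp [hg2def]
  refine ⟨k₂, g, g1, g2, hgne, ?_, hg2ev, ?_, ?_, ?_, hder2⟩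
  · rw [hg1ev]; congr 2; omega
  · omega
  · rw [← hfac, hkk, hkk2]
  · rw [hder1, hkk2]

set_option maxHeartbeats 2000000 in
/-- let `H` be a binary form of degree `m ≥ 2` with `H(1,0) ≠ 0`,
not a scalar multiple of the `m`-th power of a linear form.  Let
`R(u) = 2|Δ_H(u,1)|²/(|H_z(u,1)|²+|H_w(u,1)|²)³` where the gradient is nonzero
and `R(u) = 0` otherwise.  Then: (1) the gradient vanishes at `u` only if
`H(u,1) = 0`; (2) `R` is continuous and nonnegative; (3) `R(u) = 0` whenever
`H(u,1) = 0`; (4) `R(u) → 0` as `|u| → ∞`; (5) `R` attains a positive absolute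
maximum. -/
theorem stmt10 (m : ℕ) (hm : 2 ≤ m) (H : MvPolynomial (Fin 2) ℂ)
    (hH : H.IsHomogeneous m)
    (hH10 : eval ![1, 0] H ≠ 0)
    (hnp : ¬ ∃ c a b : ℂ,
      H = C c * (C a * X (0 : Fin 2) + C b * X (1 : Fin 2)) ^ m)
    (R : ℂ → ℝ)
    (hR : ∀ u : ℂ,
      R u =
        if eval ![u, 1] (pderiv (0 : Fin 2) H) = 0 ∧
           eval ![u, 1] (pderiv (1 : Fin 2) H) = 0 then 0
        else
          2 * ‖eval ![u, 1] (deltaH H)‖ ^ 2 /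
            (‖eval ![u, 1] (pderiv (0 : Fin 2) H)‖ ^ 2 +
              ‖eval ![u, 1] (pderiv (1 : Fin 2) H)‖ ^ 2) ^ 3) :
    (∀ u : ℂ,
        eval ![u, 1] (pderiv (0 : Fin 2) H) = 0 →
        eval ![u, 1] (pderiv (1 : Fin 2) H) = 0 →
        eval ![u, 1] H = 0) ∧
    (Continuous R ∧ ∀ u, 0 ≤ R u) ∧
    (∀ u : ℂ, eval ![u, 1] H = 0 → R u = 0) ∧
    Filter.Tendsto R (Filter.cocompact ℂ) (nhds 0) ∧
    (∃ u₀ : ℂ, 0 < R u₀ ∧ ∀ u, R u ≤ R u₀) := by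
  have hm0 : (m : ℂ) ≠ 0 := Nat.cast_ne_zero.mpr (by omega)
  set h : Polynomial ℂ := tp H with hh
  set h1 : Polynomial ℂ := Polynomial.derivative h with hh1
  set h2 : Polynomial ℂ := Polynomial.derivative h1 with hh2
  have he0 : tp (pderiv (0 : Fin 2) H) = h1 := tp_pderiv0 H
  have hE := euler hH
  have he1 : tp (pderiv (1 : Fin 2) H) = Polynomial.C (m : ℂ) * h - Polynomial.X * h1 := by
    have h' := congrArg tp hE
    simp only [map_add, map_mul, tp_C, tp_X0, tp_X1, he0, ← hh] at h'
    linear_combination h'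
  have hcast : ((m - 1 : ℕ) : ℂ) = (m : ℂ) - 1 := by
    push_cast [Nat.cast_sub (by omega : 1 ≤ m)]; ring
  have he01 : tp (pderiv (1 : Fin 2) (pderiv (0 : Fin 2) H))
      = Polynomial.C ((m : ℂ) - 1) * h1 - Polynomial.X * h2 := by
    have h' := congrArg tp (euler (pd_homog hH 0))
    simp only [map_add, map_mul, tp_C, tp_X0, tp_X1, he0, tp_pderiv0, hcast] at h'
    rw [← hh2] at h'
    linear_combination h'
  have he10 : tp (pderiv (0 : Fin 2) (pderiv (1 : Fin 2) H))
      = Polynomial.C (m : ℂ) * h1 - (h1 + Polynomial.X * h2) := by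
    rw [tp_pderiv0, he1]
    simp only [Polynomial.derivative_sub, Polynomial.derivative_mul, Polynomial.derivative_C,
      Polynomial.derivative_X, zero_mul, one_mul, ← hh1, ← hh2]
    ring
  have he11 : tp (pderiv (1 : Fin 2) (pderiv (1 : Fin 2) H))
      = Polynomial.C ((m : ℂ) - 1) * (Polynomial.C (m : ℂ) * h - Polynomial.X * h1)
        - Polynomial.X * (Polynomial.C (m : ℂ) * h1 - (h1 + Polynomial.X * h2)) := by
    have h' := congrArg tp (euler (pd_homog hH 1))
    simp only [map_add, map_mul, tp_C, tp_X0, tp_X1, he10, he1, hcast] at h'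
    linear_combination h'
  set W : Polynomial ℂ := Polynomial.C ((m : ℂ) - 1) * h1 ^ 2
      - Polynomial.C (m : ℂ) * (h * h2) with hW
  set dd : Polynomial ℂ := tp (deltaH H) with hdd
  have he00 : tp (pderiv (0 : Fin 2) (pderiv (0 : Fin 2) H)) = h2 := by
    rw [tp_pderiv0, he0, ← hh2]
  have hkey : dd = Polynomial.C (m : ℂ) * (h * W) := by
    rw [hdd]
    unfold deltaH
    simp only [map_sub, map_mul, map_pow, map_ofNat, he0, he1, he01, he11, he00, hW,
      Polynomial.C_1, map_one]
    ring
  -- basic degree facts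
  have hcoef : h.coeff m = eval ![1, 0] H := tp_coeff_top hH
  have hcne : h.coeff m ≠ 0 := by rw [hcoef]; exact hH10
  have hdegh : h.natDegree = m :=
    le_antisymm (tp_natDegree_le hH) (Polynomial.le_natDegree_of_ne_zero hcne)
  have hne : h ≠ 0 := fun h0 => hcne (by simp [h0])
  have h1coef : h1.coeff (m - 1) = eval ![1, 0] H * (m : ℂ) := by
    rw [hh1, Polynomial.coeff_derivative, show m - 1 + 1 = m by omega, hcoef]
    congr 1
    push_cast [Nat.cast_sub (by omega : 1 ≤ m)]
    ring
  have h1cne : h1.coeff (m - 1) ≠ 0 := by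
    rw [h1coef]; exact mul_ne_zero hH10 hm0
  have hdegh1 : h1.natDegree = m - 1 := by
    refine le_antisymm ?_ (Polynomial.le_natDegree_of_ne_zero h1cne)
    calc h1.natDegree ≤ h.natDegree - 1 := Polynomial.natDegree_derivative_le h
    _ = m - 1 := by rw [hdegh]
  have h1ne : h1 ≠ 0 := fun h0 => h1cne (by simp [h0])
  -- homogeneity of deltaH
  have hdel : (deltaH H).IsHomogeneous (3 * m - 4) := by
    have p0 := pd_homog hH 0
    have p1 := pd_homog hH 1
    have p00 := pd_homog p0 0
    have p01 := pd_homog p0 1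
    have p11 := pd_homog p1 1
    have e2 : deltaH H =
        (pderiv (0:Fin 2) H * pderiv (1:Fin 2) H * pderiv (1:Fin 2) (pderiv (0:Fin 2) H)
          + pderiv (0:Fin 2) H * pderiv (1:Fin 2) H * pderiv (1:Fin 2) (pderiv (0:Fin 2) H))
        - pderiv (0:Fin 2) (pderiv (0:Fin 2) H) * (pderiv (1:Fin 2) H) ^ 2
        - (pderiv (0:Fin 2) H) ^ 2 * pderiv (1:Fin 2) (pderiv (1:Fin 2) H) := by
      unfold deltaH; ring
    rw [e2]
    have hA : (pderiv (0:Fin 2) H * pderiv (1:Fin 2) H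
        * pderiv (1:Fin 2) (pderiv (0:Fin 2) H)).IsHomogeneous (3 * m - 4) := by
      have hh := (p0.mul p1).mul p01
      rwa [show m - 1 + (m - 1) + (m - 1 - 1) = 3 * m - 4 by omega] at hh
    have hB : (pderiv (0:Fin 2) (pderiv (0:Fin 2) H)
        * (pderiv (1:Fin 2) H) ^ 2).IsHomogeneous (3 * m - 4) := by
      have hh := p00.mul (p1.pow 2)
      rwa [show m - 1 - 1 + (m - 1) * 2 = 3 * m - 4 by omega] at hh
    have hC : ((pderiv (0:Fin 2) H) ^ 2
        * pderiv (1:Fin 2) (pderiv (1:Fin 2) H)).IsHomogeneous (3 * m - 4) := by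
      have hh := (p0.pow 2).mul p11
      rwa [show (m - 1) * 2 + (m - 1 - 1) = 3 * m - 4 by omega] at hh
    exact ((hA.add hA).sub hB).sub hC
  have hdddeg : dd.natDegree ≤ 3 * m - 4 := tp_natDegree_le hdel
  -- evaluation rewrites
  have hu0 : ∀ u : ℂ, eval ![u, 1] (pderiv (0 : Fin 2) H) = h1.eval u := fun u => by
    rw [← tp_eval, he0]
  have hu1 : ∀ u : ℂ, eval ![u, 1] (pderiv (1 : Fin 2) H)
      = (Polynomial.C (m : ℂ) * h - Polynomial.X * h1).eval u := fun u => by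
    rw [← tp_eval, he1]
  have hud : ∀ u : ℂ, eval ![u, 1] (deltaH H) = dd.eval u := fun u => by
    rw [← tp_eval, hdd]
  have huh : ∀ u : ℂ, eval ![u, 1] H = h.eval u := fun u => (tp_eval H u).symm
  set bb : Polynomial ℂ := Polynomial.C (m : ℂ) * h - Polynomial.X * h1 with hbb
  -- part 1
  have part1 : ∀ u : ℂ,
      eval ![u, 1] (pderiv (0 : Fin 2) H) = 0 →
      eval ![u, 1] (pderiv (1 : Fin 2) H) = 0 → eval ![u, 1] H = 0 := by
    intro u e0 e1
    have h' := congrArg (eval ![u, 1]) hE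
    simp only [map_add, map_mul, eval_X, eval_C, e0, e1, mul_zero, add_zero] at h'
    exact (mul_eq_zero.mp h'.symm).resolve_left hm0
  -- nonnegativity
  have part2b : ∀ u, 0 ≤ R u := by
    intro u
    rw [hR u]
    split_ifs
    · exact le_refl 0
    · exact div_nonneg (mul_nonneg (by norm_num) (sq_nonneg _))
        (pow_nonneg (add_nonneg (sq_nonneg _) (sq_nonneg _)) 3)
  -- part 3
  have part3 : ∀ u : ℂ, eval ![u, 1] H = 0 → R u = 0 := by
    intro u hu
    rw [hR u]
    split_ifs with hcond
    · rfl
    · have h0 : h.eval u = 0 := by rw [← huh u]; exact hu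
      have : dd.eval u = 0 := by
        rw [hkey]; simp [h0]
      rw [hud u, this]
      simp
  -- ===== part 4 : decay at infinity =====
  obtain ⟨Cd, hCd0, hCd⟩ := eval_norm_le dd (3 * m - 4) hdddeg
  obtain ⟨ε, hε, T, hT1, hTle⟩ := eval_norm_ge h1 (m - 1) hdegh1 (by omega) h1ne
  set K : ℝ := 2 * Cd ^ 2 / ε ^ 6 with hK
  have hbound : ∀ u : ℂ, T ≤ ‖u‖ → R u ≤ K / ‖u‖ ^ 2 := by
    intro u hu
    have hu1' : (1 : ℝ) ≤ ‖u‖ := le_trans hT1 hu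
    have hu0' : (0 : ℝ) < ‖u‖ := lt_of_lt_of_le one_pos hu1'
    have hA : ε * ‖u‖ ^ (m - 1) ≤ ‖h1.eval u‖ := hTle u hu
    have hApos : 0 < ‖h1.eval u‖ := lt_of_lt_of_le (by positivity) hA
    have hcond : ¬(eval ![u, 1] (pderiv (0 : Fin 2) H) = 0 ∧
        eval ![u, 1] (pderiv (1 : Fin 2) H) = 0) := by
      rintro ⟨c0, -⟩
      rw [hu0 u] at c0
      rw [c0] at hApos
      simp at hApos
    rw [hR u, if_neg hcond, hu0 u, hu1 u, hud u]
    have hDb : ‖dd.eval u‖ ≤ Cd * ‖u‖ ^ (3 * m - 4) := hCd u hu1'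
    have hstep : 2 * ‖dd.eval u‖ ^ 2 / (‖h1.eval u‖ ^ 2 + ‖bb.eval u‖ ^ 2) ^ 3
        ≤ 2 * (Cd * ‖u‖ ^ (3 * m - 4)) ^ 2 / ((ε * ‖u‖ ^ (m - 1)) ^ 2) ^ 3 := by
      apply div_le_div₀ (by positivity)
      · have := pow_le_pow_left₀ (norm_nonneg _) hDb 2
        nlinarith [this]
      · positivity
      · apply pow_le_pow_left₀ (by positivity)
        calc (ε * ‖u‖ ^ (m - 1)) ^ 2 ≤ ‖h1.eval u‖ ^ 2 :=
              pow_le_pow_left₀ (by positivity) hA 2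
        _ ≤ ‖h1.eval u‖ ^ 2 + ‖bb.eval u‖ ^ 2 := le_add_of_nonneg_right (sq_nonneg _)
    refine hstep.trans (le_of_eq ?_)
    rw [hK, ← pow_mul, mul_pow, ← pow_mul, mul_pow, ← pow_mul]
    rw [show (m - 1) * (2 * 3) = (3 * m - 4) * 2 + 2 by omega, pow_add]
    have hP : ‖u‖ ^ ((3 * m - 4) * 2) ≠ 0 := by positivity
    rw [div_eq_div_iff (by positivity) (by positivity)]
    have hε' : (ε : ℝ) ≠ 0 := ne_of_gt hε
    field_simp
  have htK : Filter.Tendsto (fun u : ℂ => K / ‖u‖ ^ 2) (Filter.cocompact ℂ) (nhds 0) := by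
    have h1' : Filter.Tendsto (fun u : ℂ => ‖u‖ ^ 2) (Filter.cocompact ℂ) Filter.atTop :=
      (Filter.tendsto_pow_atTop two_ne_zero).comp tendsto_norm_cocompact_atTop
    simpa [div_eq_mul_inv] using h1'.inv_tendsto_atTop.const_mul K
  have part4 : Filter.Tendsto R (Filter.cocompact ℂ) (nhds 0) := by
    have hev : ∀ᶠ u : ℂ in Filter.cocompact ℂ, T ≤ ‖u‖ :=
      tendsto_norm_cocompact_atTop.eventually_ge_atTop T
    exact tendsto_of_tendsto_of_tendsto_of_le_of_le' tendsto_const_nhds htK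
      (Filter.Eventually.of_forall part2b) (hev.mono hbound)
  -- ===== part 2 : continuity =====
  set F : ℂ → ℝ := fun u =>
    2 * ‖dd.eval u‖ ^ 2 / ((‖h1.eval u‖ ^ 2 + ‖bb.eval u‖ ^ 2) ^ 3) with hF
  have hRF : ∀ u : ℂ, ¬(h1.eval u = 0 ∧ bb.eval u = 0) → R u = F u := by
    intro u hcond
    rw [hR u, if_neg (by rw [hu0 u, hu1 u]; exact hcond), hu0 u, hu1 u, hud u, hF]
  have hcont : Continuous R := by
    rw [continuous_iff_continuousAt]
    intro u₀
    by_cases hgood : h1.eval u₀ = 0 ∧ bb.eval u₀ = 0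
    · -- bad point
      have hH0 : h.eval u₀ = 0 := by
        rw [← huh u₀]
        exact part1 u₀ (by rw [hu0 u₀]; exact hgood.1) (by rw [hu1 u₀]; exact hgood.2)
      obtain ⟨k₂, g, g1, g2, hgne, hg1ev, hg2ev, hkmul, hfac, hder1, hder2⟩ :=
        fact2 hne u₀ hH0 (by rw [← hh1]; exact hgood.1)
      rw [← hh1] at hder1
      rw [← hh1, ← hh2] at hder2
      set t : Polynomial ℂ := Polynomial.X - Polynomial.C u₀ with ht
      set E : Polynomial ℂ := Polynomial.C (m : ℂ) * (g *
        (Polynomial.C ((m : ℂ) - 1) * g1 ^ 2 - Polynomial.C (m : ℂ) * (g * g2))) with hEdef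
      have hddfac : dd = t ^ (3 * k₂ + 4) * E := by
        rw [hkey, hW, hfac, hder1, hder2, hEdef]
        ring
      have hRu₀ : R u₀ = 0 := by
        rw [hR u₀,
          if_pos ⟨by rw [hu0 u₀]; exact hgood.1, by rw [hu1 u₀]; exact hgood.2⟩]
      have hg1ne : g1.eval u₀ ≠ 0 := by
        rw [hg1ev]
        exact mul_ne_zero (Nat.cast_ne_zero.mpr (by omega)) hgne
      have hb : ∀ u : ℂ, g1.eval u ≠ 0 →
          R u ≤ ‖u - u₀‖ ^ 2 * (2 * ‖E.eval u‖ ^ 2 / ‖g1.eval u‖ ^ 6) := by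
        intro u hg1u
        by_cases hcond : h1.eval u = 0 ∧ bb.eval u = 0
        · have hz : R u = 0 := by
            rw [hR u, if_pos ⟨by rw [hu0 u]; exact hcond.1, by rw [hu1 u]; exact hcond.2⟩]
          rw [hz]
          positivity
        · rw [hRF u hcond]
          have hune : u ≠ u₀ := by rintro rfl; exact hcond hgood
          have htne : (u - u₀) ≠ 0 := sub_ne_zero.mpr hune
          have hh1u : h1.eval u = (u - u₀) ^ (k₂ + 1) * g1.eval u := by
            rw [hder1]; simp [ht]
          have hddu : dd.eval u = (u - u₀) ^ (3 * k₂ + 4) * E.eval u := by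
            rw [hddfac]; simp [ht]
          have step : F u ≤ 2 * ‖dd.eval u‖ ^ 2 / (‖h1.eval u‖ ^ 2) ^ 3 := by
            rw [hF]
            apply div_le_div₀ (by positivity) le_rfl
            · have h1pos : (0:ℝ) < ‖h1.eval u‖ :=
                norm_pos_iff.mpr (by rw [hh1u]; exact mul_ne_zero (pow_ne_zero _ htne) hg1u)
              exact pow_pos (pow_pos h1pos 2) 3
            · apply pow_le_pow_left₀ (by positivity)
              exact le_add_of_nonneg_right (sq_nonneg _)
          refine step.trans (le_of_eq ?_)
          rw [hddu, hh1u, mul_div_assoc' (‖u - u₀‖ ^ 2)]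
          simp only [norm_mul, norm_pow]
          rw [div_eq_div_iff]
          · ring
          · have : (0:ℝ) < ‖u - u₀‖ := norm_pos_iff.mpr htne
            have : (0:ℝ) < ‖g1.eval u‖ := norm_pos_iff.mpr hg1u
            positivity
          · have : (0:ℝ) < ‖g1.eval u‖ := norm_pos_iff.mpr hg1u
            positivity
      have hΦt : Filter.Tendsto
          (fun u => ‖u - u₀‖ ^ 2 * (2 * ‖E.eval u‖ ^ 2 / ‖g1.eval u‖ ^ 6))
          (nhds u₀) (nhds 0) := by
        have hc : ContinuousAt
            (fun u : ℂ => ‖u - u₀‖ ^ 2 * (2 * ‖E.eval u‖ ^ 2 / ‖g1.eval u‖ ^ 6)) u₀ := by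
          apply ContinuousAt.mul
          · exact (((continuous_id.sub continuous_const).norm.pow 2)).continuousAt
          · apply ContinuousAt.div
            · exact (continuous_const.mul ((E.continuous).norm.pow 2)).continuousAt
            · exact (((g1.continuous).norm.pow 6)).continuousAt
            · exact pow_ne_zero _ (norm_ne_zero_iff.mpr hg1ne)
        have h0' : ‖u₀ - u₀‖ ^ 2 * (2 * ‖E.eval u₀‖ ^ 2 / ‖g1.eval u₀‖ ^ 6) = 0 := by
          simp
        simpa [h0'] using hc.tendsto
      have hevg : ∀ᶠ u in nhds u₀, g1.eval u ≠ 0 :=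
        (g1.continuous.continuousAt).eventually_ne hg1ne
      unfold ContinuousAt
      rw [hRu₀]
      exact tendsto_of_tendsto_of_tendsto_of_le_of_le' tendsto_const_nhds hΦt
        (Filter.Eventually.of_forall part2b) (hevg.mono hb)
    · -- good point
      have hSpos : 0 < ‖h1.eval u₀‖ ^ 2 + ‖bb.eval u₀‖ ^ 2 := by
        rcases not_and_or.mp hgood with hc | hc
        · have h' : (0:ℝ) < ‖h1.eval u₀‖ := norm_pos_iff.mpr hc
          positivity
        · have h' : (0:ℝ) < ‖bb.eval u₀‖ := norm_pos_iff.mpr hc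
          positivity
      have hFc : ContinuousAt F u₀ := by
        rw [hF]
        apply ContinuousAt.div
        · exact (continuous_const.mul ((dd.continuous).norm.pow 2)).continuousAt
        · exact ((((h1.continuous).norm.pow 2).add ((bb.continuous).norm.pow 2)).pow 3).continuousAt
        · exact pow_ne_zero _ (ne_of_gt hSpos)
      have hopen : IsOpen {u : ℂ | ¬(h1.eval u = 0 ∧ bb.eval u = 0)} := by
        have hcl : IsClosed {u : ℂ | h1.eval u = 0 ∧ bb.eval u = 0} := by
          rw [Set.setOf_and]
          exact (isClosed_eq h1.continuous continuous_const).inter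
            (isClosed_eq bb.continuous continuous_const)
        exact hcl.isOpen_compl
      have heq : F =ᶠ[nhds u₀] R :=
        Filter.eventuallyEq_of_mem (hopen.mem_nhds hgood) fun u hu => (hRF u hu).symm
      exact hFc.congr heq
  -- ===== part 5 =====
  have hddne : dd ≠ 0 := by
    intro hdd0
    rw [hkey] at hdd0
    have hW0 : W = 0 := by
      rcases mul_eq_zero.mp hdd0 with hc | hc
      · exact absurd (by simpa using hc) hm0
      · rcases mul_eq_zero.mp hc with hc' | hc'
        · exact absurd hc' hne
        · exact hc'
    have hWW : Polynomial.C ((m:ℂ) - 1) * h1 ^ 2 = Polynomial.C (m:ℂ) * (h * h2) := by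
      rw [hW] at hW0
      exact sub_eq_zero.mp hW0
    have hdpos : 0 < h.degree := by
      rw [Polynomial.degree_eq_natDegree hne, hdegh]
      exact_mod_cast (by omega : 0 < m)
    obtain ⟨r, hr⟩ := Complex.exists_root hdpos
    have hr' : h.eval r = 0 := hr
    have hm1 : ((m:ℂ) - 1) ≠ 0 := by
      intro hc
      have h' : (m:ℂ) = 1 := by linear_combination hc
      have : m = 1 := by exact_mod_cast h'
      omega
    have h1r : h1.eval r = 0 := by
      have hev := congrArg (Polynomial.eval r) hWW
      simp only [Polynomial.eval_mul, Polynomial.eval_C, Polynomial.eval_pow, hr',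
        mul_zero, zero_mul] at hev
      rcases mul_eq_zero.mp hev with hc | hc
      · exact absurd hc hm1
      · exact pow_eq_zero_iff two_ne_zero |>.mp hc
    obtain ⟨k₂, g, g1, g2, hgne, hg1ev, hg2ev, hkmul, hfac, hder1, hder2⟩ :=
      fact2 hne r hr' (by rw [← hh1]; exact h1r)
    rw [← hh1] at hder1
    rw [← hh1, ← hh2] at hder2
    have htne : (Polynomial.X - Polynomial.C r) ≠ 0 := Polynomial.X_sub_C_ne_zero r
    have hcan : Polynomial.C ((m:ℂ) - 1) * g1 ^ 2 = Polynomial.C (m:ℂ) * (g * g2) := by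
      have hexp : Polynomial.C ((m:ℂ) - 1) * h1 ^ 2
          = (Polynomial.X - Polynomial.C r) ^ (2 * k₂ + 2)
            * (Polynomial.C ((m:ℂ) - 1) * g1 ^ 2) := by
        rw [hder1]; ring
      have hexp2 : Polynomial.C (m:ℂ) * (h * h2)
          = (Polynomial.X - Polynomial.C r) ^ (2 * k₂ + 2)
            * (Polynomial.C (m:ℂ) * (g * g2)) := by
        rw [hfac, hder2]; ring
      have h' := hWW
      rw [hexp, hexp2] at h'
      exact mul_left_cancel₀ (pow_ne_zero _ htne) h'
    have heq := congrArg (Polynomial.eval r) hcan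
    simp only [Polynomial.eval_mul, Polynomial.eval_C, Polynomial.eval_pow] at heq
    rw [hg1ev, hg2ev, hg1ev] at heq
    push_cast at heq
    have hK0 : ((k₂:ℂ) + 2) ≠ 0 := by
      have h' : ((k₂ + 2 : ℕ):ℂ) ≠ 0 := Nat.cast_ne_zero.mpr (by omega)
      push_cast at h'
      exact h'
    have hfact : ((k₂:ℂ) + 2) * (g.eval r) ^ 2 * ((m:ℂ) - ((k₂:ℂ) + 2)) = 0 := by
      linear_combination heq
    have hdiff : (m:ℂ) - ((k₂:ℂ) + 2) = 0 := by
      rcases mul_eq_zero.mp hfact with hc | hc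
      · rcases mul_eq_zero.mp hc with hc' | hc'
        · exact absurd hc' hK0
        · exact absurd (pow_eq_zero_iff two_ne_zero |>.mp hc') hgne
      · exact hc
    have hmk : k₂ + 2 = m := by
      have h' : ((k₂ + 2 : ℕ):ℂ) = (m:ℂ) := by push_cast; linear_combination - hdiff
      exact_mod_cast h'
    have hgne0 : g ≠ 0 := fun h0 => hgne (by rw [h0]; simp)
    have hgdeg : g.natDegree = 0 := by
      have hnd := congrArg Polynomial.natDegree hfac
      rw [Polynomial.natDegree_mul (pow_ne_zero _ htne) hgne0, Polynomial.natDegree_pow,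
        Polynomial.natDegree_X_sub_C, hdegh] at hnd
      omega
    obtain ⟨cg, hcg⟩ := Polynomial.natDegree_eq_zero.mp hgdeg
    have hcgne : cg ≠ 0 := by
      intro h0
      apply hgne
      rw [← hcg, h0]
      simp
    set H' : MvPolynomial (Fin 2) ℂ := C cg * (C 1 * X (0:Fin 2) + C (-r) * X 1) ^ m
      with hH'def
    have hH'hom : H'.IsHomogeneous m := by
      have hlin : (C (1:ℂ) * X (0:Fin 2) + C (-r) * X 1).IsHomogeneous 1 :=
        (isHomogeneous_C_mul_X 1 0).add (isHomogeneous_C_mul_X (-r) 1)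
      have hp := hlin.pow m
      rw [one_mul] at hp
      exact hp.C_mul cg
    have htpH' : tp H' = h := by
      rw [hH'def]
      simp only [map_mul, map_pow, map_add, tp_C, tp_X0, tp_X1]
      rw [hfac, ← hcg, ← hmk]
      simp only [Polynomial.C_1, map_neg, mul_one, one_mul]
      ring
    have hscale : ∀ P : MvPolynomial (Fin 2) ℂ, P.IsHomogeneous m → ∀ z w : ℂ, w ≠ 0 →
        eval ![z, w] P = w ^ m * eval ![z / w, 1] P := by
      intro P hP z w hw
      have hx : (![z, w] : Fin 2 → ℂ) = fun i => w * (![z / w, 1] : Fin 2 → ℂ) i := by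
        funext i
        fin_cases i
        · simp
          field_simp
        · simp
      rw [hx, eval_smul_homog hP w ![z / w, 1]]
    have hsame1 : ∀ u : ℂ, eval ![u, 1] H = eval ![u, 1] H' := by
      intro u
      rw [← tp_eval H u, ← tp_eval H' u, htpH', ← hh]
    have hsame : ∀ z w : ℂ, w ≠ 0 → eval ![z, w] H = eval ![z, w] H' := by
      intro z w hw
      rw [hscale H hH z w hw, hscale H' hH'hom z w hw, hsame1]
    have hall : ∀ x : Fin 2 → ℂ, eval x H = eval x H' := by
      intro x
      have hx2 : x = ![x 0, x 1] := by
        funext i; fin_cases i <;> simp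
      rcases eq_or_ne (x 1) 0 with h10 | h10
      · have hq : tpw (x 0) H - tpw (x 0) H' = 0 := by
          apply Polynomial.eq_zero_of_infinite_isRoot
          have hinf : ({0}ᶜ : Set ℂ).Infinite := (Set.finite_singleton 0).infinite_compl
          refine hinf.mono ?_
          intro w hw
          have hw0 : w ≠ 0 := hw
          simp only [Set.mem_setOf_eq, Polynomial.IsRoot, Polynomial.eval_sub, tpw_eval]
          rw [hsame _ _ hw0, sub_self]
        have hq0 := congrArg (Polynomial.eval (0:ℂ)) hq
        simp only [Polynomial.eval_sub, tpw_eval, Polynomial.eval_zero] at hq0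
        rw [hx2, h10]
        exact sub_eq_zero.mp hq0
      · rw [hx2]
        exact hsame _ _ h10
    exact hnp ⟨cg, 1, -r, IsHomogeneous.funext hH hH'hom hall⟩
  have hex : ∃ u₁ : ℂ, dd.eval u₁ ≠ 0 := by
    by_contra hc
    push_neg at hc
    exact hddne (Polynomial.funext fun r => by rw [hc r, Polynomial.eval_zero])
  obtain ⟨u₁, hu₁⟩ := hex
  have hcond₁ : ¬(eval ![u₁, 1] (pderiv (0:Fin 2) H) = 0 ∧
      eval ![u₁, 1] (pderiv (1:Fin 2) H) = 0) := by
    rintro ⟨c0, c1⟩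
    have hh0 := part1 u₁ c0 c1
    rw [huh u₁] at hh0
    apply hu₁
    rw [hkey]
    simp [hh0]
  have hpos₁ : 0 < R u₁ := by
    rw [hR u₁, if_neg hcond₁]
    apply div_pos
    · have habs : 0 < ‖eval ![u₁, 1] (deltaH H)‖ := by
        rw [hud u₁]
        exact norm_pos_iff.mpr hu₁
      have := pow_pos habs 2
      linarith
    · rcases not_and_or.mp hcond₁ with hc | hc
      · have hA : 0 < ‖eval ![u₁, 1] (pderiv (0:Fin 2) H)‖ :=
          norm_pos_iff.mpr hc
        exact pow_pos (lt_of_lt_of_le (pow_pos hA 2)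
          (le_add_of_nonneg_right (sq_nonneg _))) 3
      · have hB : 0 < ‖eval ![u₁, 1] (pderiv (1:Fin 2) H)‖ :=
          norm_pos_iff.mpr hc
        exact pow_pos (lt_of_lt_of_le (pow_pos hB 2)
          (le_add_of_nonneg_left (sq_nonneg _))) 3
  have hevlt : ∀ᶠ u in Filter.cocompact ℂ, R u ≤ R u₁ :=
    (part4.eventually_lt_const hpos₁).mono fun u hu => le_of_lt hu
  obtain ⟨u₀max, hu₀max⟩ := hcont.exists_forall_ge' u₁ hevlt
  exact ⟨part1, ⟨hcont, part2b⟩, part3, part4,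
    u₀max, lt_of_lt_of_le hpos₁ (hu₀max u₁), hu₀max⟩
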